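/- For positive integers k < n <= m, M(k,n) + M(k,m) <= M(k,n+m), where M(k,n) is the maximum multiplicity of s_k in a reduced word of the longest element of S_n. -/

import Mathlib

/-- The simple transposition `s_i = (i, i+1)` (1-indexed values) in `S_n`,
realized on `Fin n` (0-indexed positions `i-1` and `i`); junk value `1` otherwise. -/
def sgen (n i : ℕ) : Equiv.Perm (Fin n) :=
  if h : 0 < i ∧ i < n then Equiv.swap ⟨i - 1, by omega⟩ ⟨i, h.2⟩ else 1

/-- `l` is a reduced word for `w ∈ S_n`: its product is `w` and it has minimal length. -/
def IsReducedWordFor (n : ℕ) (l : List ℕ) (w : Equiv.Perm (Fin n)) : Prop :=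
  (l.map (sgen n)).prod = w ∧
    ∀ l' : List ℕ, (l'.map (sgen n)).prod = w → l.length ≤ l'.length

/-- The longest permutation `w_0 = n (n-1) ⋯ 2 1` of `S_n`. -/
def longestPerm (n : ℕ) : Equiv.Perm (Fin n) := Fin.revPerm

/-- `M(k,n)`: the maximum multiplicity of `s_k` among reduced words of `w_0 ∈ S_n`. -/
noncomputable def Mmax (k n : ℕ) : ℕ :=
  sSup {N | ∃ l : List ℕ, IsReducedWordFor n l (longestPerm n) ∧ l.count k = N}

/-- Two finite sets are weakly separated. -/
def WeaklySeparated (I J : Finset ℕ) : Prop :=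
  (∀ a ∈ I \ J, ∀ b ∈ J \ I, a < b) ∨ (∀ b ∈ J \ I, ∀ a ∈ I \ J, b < a)

/-- A monotone weakly separated path: pairwise weakly separated, and each step removes
one element `y` and adds one element `x > y`. -/
def IsMWSPath (P : List (Finset ℕ)) : Prop :=
  (∀ A ∈ P, ∀ B ∈ P, WeaklySeparated A B) ∧
    List.Chain' (fun A B => ∃ x y, y ∈ A ∧ x ∉ A ∧ y < x ∧ B = insert x (A.erase y)) P

/-! ### Auxiliary lemmas -/

lemma sgen_apply (N a : ℕ) (h1 : 0 < a) (h2 : a < N) (x : Fin N) :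
    (sgen N a x).1 = if x.1 = a - 1 then a else if x.1 = a then a - 1 else x.1 := by
  rw [sgen, dif_pos ⟨h1, h2⟩, Equiv.swap_apply_def]
  simp only [Fin.ext_iff]
  split_ifs <;> simp_all

lemma sgen_junk (N a : ℕ) (h : ¬ (0 < a ∧ a < N)) : sgen N a = 1 := by
  rw [sgen, dif_neg h]

/-- `[j, j-1, ..., 1]`. -/
def descList : ℕ → List ℕ
  | 0 => []
  | (j+1) => (j+1) :: descList j

/-- `[a+1, a+2, ..., a+len]`. -/
def ascList (a len : ℕ) : List ℕ := (List.range len).map (fun t => a + 1 + t)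

/-- word for the longest element, built recursively. -/
def wordW : ℕ → List ℕ
  | 0 => []
  | (j+1) => wordW j ++ descList j

/-- word for the block-shift permutation. -/
def wordV : ℕ → ℕ → List ℕ
  | 0, _ => []
  | (r+1), m => ascList r m ++ wordV r m

@[simp] lemma descList_length (j : ℕ) : (descList j).length = j := by
  induction j with
  | zero => rfl
  | succ j ih => simp [descList, ih]

@[simp] lemma ascList_length (a len : ℕ) : (ascList a len).length = len := by
  simp [ascList]

lemma wordW_length (j : ℕ) : 2 * (wordW j).length + j = j * j := by
  induction j with
  | zero => rfl
  | succ j ih =>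
    have h2 : (j+1) * (j+1) = j*j + 2*j + 1 := by ring
    simp only [wordW, List.length_append, descList_length]
    omega

lemma wordV_length (r m : ℕ) : (wordV r m).length = r * m := by
  induction r with
  | zero => simp [wordV]
  | succ r ih =>
    have : (r+1) * m = r * m + m := by ring
    simp only [wordV, List.length_append, ascList_length, ih]
    omega

lemma descProd_apply (N j : ℕ) (h : j < N) (x : Fin N) :
    (((descList j).map (sgen N)).prod x).1 =
      if x.1 = 0 then j else if x.1 ≤ j then x.1 - 1 else x.1 := by
  induction j generalizing x with
  | zero =>
    simp only [descList, List.map_nil, List.prod_nil, Equiv.Perm.one_apply]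
    split_ifs <;> omega
  | succ j ih =>
    simp only [descList, List.map_cons, List.prod_cons, Equiv.Perm.mul_apply]
    rw [sgen_apply N (j+1) (by omega) h]
    rw [ih (by omega)]
    have hx := x.2
    split_ifs <;> omega

lemma ascProd_apply (N a len : ℕ) (h : a + len < N) (x : Fin N) :
    (((ascList a len).map (sgen N)).prod x).1 =
      if x.1 = a + len then a else if a ≤ x.1 ∧ x.1 < a + len then x.1 + 1 else x.1 := by
  induction len generalizing x with
  | zero =>
    simp only [ascList, List.range_zero, List.map_nil, List.prod_nil, Equiv.Perm.one_apply]
    split_ifs <;> omega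
  | succ len ih =>
    have hstep : ascList a (len+1) = ascList a len ++ [a + 1 + len] := by
      simp [ascList, List.range_succ]
    rw [hstep]
    simp only [List.map_append, List.prod_append, List.map_cons, List.prod_cons,
      List.map_nil, List.prod_nil, mul_one, Equiv.Perm.mul_apply]
    rw [ih (by omega), sgen_apply N (a+1+len) (by omega) (by omega)]
    have hx := x.2
    split_ifs <;> omega

lemma wordW_prod_apply (N j : ℕ) (h : j ≤ N) (x : Fin N) :
    (((wordW j).map (sgen N)).prod x).1 = if x.1 < j then j - 1 - x.1 else x.1 := by
  induction j generalizing x with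
  | zero =>
    simp only [wordW, List.map_nil, List.prod_nil, Equiv.Perm.one_apply]
    split_ifs <;> omega
  | succ j ih =>
    simp only [wordW, List.map_append, List.prod_append, Equiv.Perm.mul_apply]
    have h1 := descProd_apply N j (by omega) x
    rw [ih (by omega), h1]
    have hx := x.2
    split_ifs <;> omega

lemma wordV_prod_apply (N r m : ℕ) (h : r + m ≤ N) (x : Fin N) :
    (((wordV r m).map (sgen N)).prod x).1 =
      if x.1 < m then x.1 + r else if x.1 < m + r then x.1 - m else x.1 := by
  induction r generalizing x with
  | zero =>
    simp only [wordV, List.map_nil, List.prod_nil, Equiv.Perm.one_apply]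
    split_ifs <;> omega
  | succ r ih =>
    simp only [wordV, List.map_append, List.prod_append, Equiv.Perm.mul_apply]
    rw [ascProd_apply N r m (by omega), ih (by omega)]
    have hx := x.2
    split_ifs <;> omega

/-- Words with small letters fix large points. -/
lemma prod_fix_of_letters_lt (N n : ℕ) (l : List ℕ) (hl : ∀ i ∈ l, 0 < i ∧ i < n)
    (x : Fin N) (hx : n ≤ x.1) : ((l.map (sgen N)).prod x) = x := by
  induction l with
  | nil => simp
  | cons a l ih =>
    have ha := hl a (by simp)
    have hrest := ih (fun i hi => hl i (by simp [hi]))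
    simp only [List.map_cons, List.prod_cons, Equiv.Perm.mul_apply, hrest]
    have : a < N := by omega
    apply Fin.ext
    rw [sgen_apply N a ha.1 this]
    split_ifs <;> omega

/-- Words with small letters act as in the smaller symmetric group. -/
lemma prod_embed (N n : ℕ) (hn : n ≤ N) (l : List ℕ) (hl : ∀ i ∈ l, 0 < i ∧ i < n)
    (x : Fin N) (hx : x.1 < n) :
    ((l.map (sgen N)).prod x).1 = ((l.map (sgen n)).prod ⟨x.1, hx⟩).1 := by
  induction l generalizing x with
  | nil => simp
  | cons a l ih =>
    have ha := hl a (by simp)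
    simp only [List.map_cons, List.prod_cons, Equiv.Perm.mul_apply]
    have h1 := ih (fun i hi => hl i (by simp [hi])) x hx
    have h2 : ((l.map (sgen n)).prod ⟨x.1, hx⟩).1 < n := Fin.is_lt _
    rw [sgen_apply N a ha.1 (by omega), sgen_apply n a ha.1 ha.2, h1]

lemma prod_filter_eq (n : ℕ) (l : List ℕ) :
    ((l.filter (fun i => decide (0 < i ∧ i < n))).map (sgen n)).prod = (l.map (sgen n)).prod := by
  induction l with
  | nil => rfl
  | cons a l ih =>
    by_cases ha : 0 < a ∧ a < n
    · rw [List.filter_cons_of_pos (by simpa using ha)]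
      simp only [List.map_cons, List.prod_cons, ih]
    · rw [List.filter_cons_of_neg (by simpa using ha)]
      simp only [List.map_cons, List.prod_cons, ih, sgen_junk n a ha, one_mul]

lemma reduced_letters {n : ℕ} {l : List ℕ} {w : Equiv.Perm (Fin n)}
    (h : IsReducedWordFor n l w) : ∀ i ∈ l, 0 < i ∧ i < n := by
  have hlen : l.length ≤ (l.filter (fun i => decide (0 < i ∧ i < n))).length :=
    h.2 _ ((prod_filter_eq n l).trans h.1)
  have := List.length_filter_le (fun i => decide (0 < i ∧ i < n)) l
  have heq : (l.filter (fun i => decide (0 < i ∧ i < n))).length = l.length := by omega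
  have := List.length_filter_eq_length_iff.mp heq
  intro i hi
  simpa using this i hi

lemma exists_reduced {n : ℕ} (w : Equiv.Perm (Fin n))
    (hw : ∃ l : List ℕ, (l.map (sgen n)).prod = w) :
    ∃ l, IsReducedWordFor n l w := by
  classical
  obtain ⟨l0, hl0⟩ := hw
  have hP : ∃ L, ∃ l : List ℕ, (l.map (sgen n)).prod = w ∧ l.length = L :=
    ⟨l0.length, l0, hl0, rfl⟩
  obtain ⟨l, hl, hlen⟩ := Nat.find_spec hP
  refine ⟨l, hl, fun l' hl' => ?_⟩
  rw [hlen]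
  exact Nat.find_le ⟨l', hl', rfl⟩

/-! ### Inversion counting -/

def invSet {N : ℕ} (w : Equiv.Perm (Fin N)) : Finset (Fin N × Fin N) :=
  Finset.univ.filter fun p => p.1 < p.2 ∧ w p.2 < w p.1

noncomputable def invCount {N : ℕ} (w : Equiv.Perm (Fin N)) : ℕ := (invSet w).card

lemma invCount_one (N : ℕ) : invCount (1 : Equiv.Perm (Fin N)) = 0 := by
  rw [invCount, Finset.card_eq_zero]
  ext p
  rw [invSet, Finset.mem_filter]
  simp only [invSet, Finset.mem_filter, Finset.mem_univ, true_and, Equiv.Perm.one_apply,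
    Finset.notMem_empty, iff_false]
  rintro ⟨h1, h2⟩
  exact absurd h1 (not_lt.mpr h2.le)

lemma invSet_mul_subset (N a : ℕ) (h1 : 0 < a) (h2 : a < N) (w : Equiv.Perm (Fin N)) :
    invSet (sgen N a * w) ⊆
      insert (w⁻¹ ⟨a - 1, by omega⟩, w⁻¹ ⟨a, h2⟩) (invSet w) := by
  intro p hp
  obtain ⟨i, j⟩ := p
  rw [invSet, Finset.mem_filter] at hp
  simp only [invSet, Finset.mem_filter, Finset.mem_univ, true_and, Equiv.Perm.mul_apply] at hp
  obtain ⟨hij, hlt⟩ := hp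
  rw [Finset.mem_insert, invSet, Finset.mem_filter]
  simp only [Finset.mem_insert, invSet, Finset.mem_filter, Finset.mem_univ, true_and]
  by_cases hex : (w i).1 = a - 1 ∧ (w j).1 = a
  · left
    have hi : w i = ⟨a - 1, by omega⟩ := Fin.ext hex.1
    have hj : w j = ⟨a, h2⟩ := Fin.ext hex.2
    rw [Prod.ext_iff]
    constructor
    · simp [← hi]
    · simp [← hj]
  · right
    refine ⟨hij, ?_⟩
    have hne : w i ≠ w j := fun h => absurd (w.injective h) (ne_of_lt hij)
    have hne' : (w i).1 ≠ (w j).1 := fun h => hne (Fin.ext h)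
    rw [Fin.lt_def] at hlt ⊢
    rw [sgen_apply N a h1 h2, sgen_apply N a h1 h2] at hlt
    split_ifs at hlt <;> omega

lemma invCount_mul_le (N a : ℕ) (w : Equiv.Perm (Fin N)) :
    invCount (sgen N a * w) ≤ invCount w + 1 := by
  by_cases h : 0 < a ∧ a < N
  · calc invCount (sgen N a * w) ≤
        (insert (w⁻¹ ⟨a - 1, by omega⟩, w⁻¹ ⟨a, h.2⟩) (invSet w)).card :=
          Finset.card_le_card (invSet_mul_subset N a h.1 h.2 w)
      _ ≤ invCount w + 1 := Finset.card_insert_le _ _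
  · rw [sgen_junk N a h, one_mul]; omega

lemma invCount_prod_le (N : ℕ) (l : List ℕ) :
    invCount ((l.map (sgen N)).prod) ≤ l.length := by
  induction l with
  | nil => simp [invCount_one]
  | cons a l ih =>
    simp only [List.map_cons, List.prod_cons, List.length_cons]
    calc invCount (sgen N a * (l.map (sgen N)).prod)
        ≤ invCount ((l.map (sgen N)).prod) + 1 := invCount_mul_le N a _
      _ ≤ l.length + 1 := by omega

lemma card_lt_pairs (N : ℕ) :
    2 * (Finset.univ.filter fun p : Fin N × Fin N => p.1 < p.2).card + N = N * N := by
  classical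
  set A := Finset.univ.filter fun p : Fin N × Fin N => p.1 < p.2 with hA
  set B := Finset.univ.filter fun p : Fin N × Fin N => p.2 < p.1 with hB
  set C := Finset.univ.filter fun p : Fin N × Fin N => p.1 = p.2 with hC
  have hAB : A.card = B.card := by
    apply Finset.card_nbij' (fun p => (p.2, p.1)) (fun p => (p.2, p.1)) <;>
      simp [hA, hB, Set.MapsTo, Set.LeftInvOn, Set.RightInvOn]
  have hCcard : C.card = N := by
    have : C.card = (Finset.univ : Finset (Fin N)).card := by
      apply Finset.card_nbij' (fun p => p.1) (fun i => (i, i)) <;> simp [hC, Set.MapsTo, Set.LeftInvOn, Set.RightInvOn, Prod.ext_iff]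
    simpa using this
  have hunion : A ∪ B ∪ C = Finset.univ := by
    ext p
    simp only [Finset.mem_union, hA, hB, hC, Finset.mem_filter, Finset.mem_univ, true_and,
      iff_true]
    rcases lt_trichotomy p.1 p.2 with h | h | h
    · exact Or.inl (Or.inl h)
    · exact Or.inr h
    · exact Or.inl (Or.inr h)
  have hd1 : Disjoint A B := by
    rw [Finset.disjoint_left]
    intro p hp hq
    simp [hA, hB, Finset.mem_filter] at hp hq
    exact absurd (hp.trans hq) (lt_irrefl _)
  have hd2 : Disjoint (A ∪ B) C := by
    rw [Finset.disjoint_left]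
    intro p hp hq
    simp only [hA, hB, hC, Finset.mem_union, Finset.mem_filter, Finset.mem_univ, true_and] at hp hq
    rcases hp with h | h <;> rw [hq] at h <;> exact absurd h (lt_irrefl _)
  have := Finset.card_union_of_disjoint hd2
  rw [hunion, Finset.card_union_of_disjoint hd1] at this
  have huniv : (Finset.univ : Finset (Fin N × Fin N)).card = N * N := by
    simp [Finset.card_univ]
  omega

lemma invCount_longest (N : ℕ) :
    2 * invCount (Fin.revPerm : Equiv.Perm (Fin N)) + N = N * N := by
  have : invSet (Fin.revPerm : Equiv.Perm (Fin N)) =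
      Finset.univ.filter fun p : Fin N × Fin N => p.1 < p.2 := by
    ext p
    simp only [invSet, Finset.mem_filter, Finset.mem_univ, true_and, Fin.revPerm_apply]
    constructor
    · exact fun h => h.1
    · exact fun h => ⟨h, by simpa using Fin.rev_lt_rev.mpr h⟩
  rw [invCount, this]
  exact card_lt_pairs N

/-! ### Assembling -/

lemma wordW_prod (n : ℕ) : ((wordW n).map (sgen n)).prod = longestPerm n := by
  apply Equiv.ext
  intro x
  apply Fin.ext
  rw [wordW_prod_apply n n le_rfl x]
  have hx := x.2
  simp only [longestPerm, Fin.revPerm_apply, Fin.val_rev]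
  split_ifs <;> omega

lemma reduced_len {n : ℕ} {l : List ℕ} (h : IsReducedWordFor n l (longestPerm n)) :
    2 * l.length + n ≤ n * n := by
  have h1 : l.length ≤ (wordW n).length := h.2 (wordW n) (wordW_prod n)
  have h2 := wordW_length n
  omega

lemma mmax_set_bdd (k n : ℕ) :
    BddAbove {c | ∃ l : List ℕ, IsReducedWordFor n l (longestPerm n) ∧ l.count k = c} := by
  refine ⟨n * n, fun c hc => ?_⟩
  obtain ⟨l, hl, rfl⟩ := hc
  have := reduced_len hl
  have := List.count_le_length (l := l) (a := k)
  omega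

lemma mmax_set_nonempty (k n : ℕ) :
    {c | ∃ l : List ℕ, IsReducedWordFor n l (longestPerm n) ∧ l.count k = c}.Nonempty := by
  obtain ⟨l, hl⟩ := exists_reduced (longestPerm n) ⟨wordW n, wordW_prod n⟩
  exact ⟨l.count k, l, hl, rfl⟩

theorem stmt3 (k n m : ℕ) (hk : 0 < k) (hkn : k < n) (hnm : n ≤ m) :
    Mmax k n + Mmax k m ≤ Mmax k (n + m) := by
  classical
  set N := n + m with hN
  -- pick optimal reduced words for w₀(n) and w₀(m)
  obtain ⟨l₁, hred₁, hcnt₁⟩ :=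
    Nat.sSup_mem (mmax_set_nonempty k n) (mmax_set_bdd k n)
  obtain ⟨l₂, hred₂, hcnt₂⟩ :=
    Nat.sSup_mem (mmax_set_nonempty k m) (mmax_set_bdd k m)
  have hl₁ := reduced_letters hred₁
  have hl₂ := reduced_letters hred₂
  set L : List ℕ := l₁ ++ wordV n m ++ l₂ with hL
  have hmN : m ≤ N := by omega
  have hnN : n ≤ N := by omega
  -- the product of L is the longest permutation of S_N
  have hprod : (L.map (sgen N)).prod = longestPerm N := by
    apply Equiv.ext
    intro x
    apply Fin.ext
    simp only [hL, List.map_append, List.prod_append, Equiv.Perm.mul_apply]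
    have hx := x.2
    have hrevN : (longestPerm N x).1 = N - (x.1 + 1) := by
      simp [longestPerm, Fin.val_rev]
    by_cases hxm : x.1 < m
    · -- first the w₀(m)-block acts
      have h2 : (((l₂.map (sgen N)).prod) x).1 = m - (x.1 + 1) := by
        rw [prod_embed N m hmN l₂ hl₂ x hxm, hred₂.1]
        simp [longestPerm, Fin.val_rev]
      set y := ((l₂.map (sgen N)).prod) x with hy
      have h3 : (((wordV n m).map (sgen N)).prod y).1 = m - (x.1 + 1) + n := by
        rw [wordV_prod_apply N n m (by omega) y]
        rw [if_pos (by omega : y.1 < m), h2]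
      set z := ((wordV n m).map (sgen N)).prod y with hz
      have h4 : ((l₁.map (sgen N)).prod z) = z :=
        prod_fix_of_letters_lt N n l₁ hl₁ z (by omega)
      rw [h4, h3, hrevN]
      omega
    · have h2 : ((l₂.map (sgen N)).prod) x = x :=
        prod_fix_of_letters_lt N m l₂ hl₂ x (by omega)
      rw [h2]
      have h3 : (((wordV n m).map (sgen N)).prod x).1 = x.1 - m := by
        rw [wordV_prod_apply N n m (by omega) x]
        rw [if_neg (by omega), if_pos (by omega)]
      set z := ((wordV n m).map (sgen N)).prod x with hz
      have hzn : z.1 < n := by omega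
      have h4 : ((l₁.map (sgen N)).prod z).1 = n - (z.1 + 1) := by
        rw [prod_embed N n hnN l₁ hl₁ z hzn, hred₁.1]
        simp [longestPerm, Fin.val_rev]
      rw [h4, h3, hrevN]
      omega
  -- L is reduced
  have hLlen : L.length = l₁.length + (n * m + l₂.length) := by
    simp [hL, wordV_length]
  have hredL : IsReducedWordFor N L (longestPerm N) := by
    refine ⟨hprod, fun l' hl' => ?_⟩
    have hinv : invCount ((l'.map (sgen N)).prod) ≤ l'.length := invCount_prod_le N l'
    rw [hl'] at hinv
    have hinv2 : 2 * invCount (Fin.revPerm : Equiv.Perm (Fin N)) + N = N * N :=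
      invCount_longest N
    have hIC : invCount (longestPerm N) = invCount (Fin.revPerm : Equiv.Perm (Fin N)) := rfl
    rw [hIC] at hinv
    have hlen1 := reduced_len hred₁
    have hlen2 := reduced_len hred₂
    have hexp : N * N = n * n + 2 * (n * m) + m * m := by rw [hN]; ring
    omega
  -- conclude
  have hmem : L.count k ∈
      {c | ∃ l : List ℕ, IsReducedWordFor N l (longestPerm N) ∧ l.count k = c} :=
    ⟨L, hredL, rfl⟩
  have hle : L.count k ≤ Mmax k N := le_csSup (mmax_set_bdd k N) hmem
  have e1 : Mmax k n = l₁.count k := by unfold Mmax; exact hcnt₁.symm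
  have e2 : Mmax k m = l₂.count k := by unfold Mmax; exact hcnt₂.symm
  have hcount : Mmax k n + Mmax k m ≤ L.count k := by
    simp only [hL, List.count_append]
    omega
  calc Mmax k n + Mmax k m ≤ L.count k := hcount
    _ ≤ Mmax k N := hle
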